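/- Let n ≥ 1 and let f : ℝⁿ → [0,∞) be upper semicontinuous such that for every s > 0 the superlevel set K_s = {x : f(x) ≥ s} is compact and convex (possibly empty). Define F(t) = ∫₀^∞ vol(K_s + tB) ds for t ≥ 0, and assume F(t₀) < ∞ for some t₀ > 0. Then there is a function S : (0,∞) → [0,∞) such that: (1) for every s > 0, (vol(K_s + tB) − vol(K_s))/t → S(s) as t → 0⁺ (so S(s) is the Minkowski surface area of K_s, with S(s) = 0 when K_s = ∅); (2) ∫₀^∞ S(s) ds < ∞; and (3) (F(t) − F(0))/t → ∫₀^∞ S(s) ds as t → 0⁺, i.e., F is right-differentiable at 0 with derivative ∫₀^∞ S(s) ds. -/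

import Mathlib

open MeasureTheory Filter Set Metric
open scoped Topology ENNReal Pointwise

open Module
open scoped RealInnerProductSpace

noncomputable section

abbrev Euc (n : ℕ) := EuclideanSpace ℝ (Fin n)

namespace Stmt3Aux

variable {n : ℕ}

/-- volume of a 1-Lipschitz image is at most the volume of the set. -/
lemma vol_image_le {f : Euc n → Euc n} {s : Set (Euc n)} (hf : LipschitzOnWith 1 f s) :
    volume (f '' s) ≤ volume s := by
  have h1 : (volume : Measure (Euc n))
      = Measure.addHaarScalarFactor (volume : Measure (Euc n)) μH[finrank ℝ (Euc n)]
         • μH[finrank ℝ (Euc n)] :=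
    Measure.isAddLeftInvariant_eq_smul _ _
  have h2 : μH[(finrank ℝ (Euc n) : ℝ)] (f '' s) ≤ μH[(finrank ℝ (Euc n) : ℝ)] s := by
    simpa using hf.hausdorffMeasure_image_le (by positivity : (0:ℝ) ≤ finrank ℝ (Euc n))
  rw [h1]
  simp only [Measure.smul_apply, smul_eq_mul]
  gcongr


def IsProj (K : Set (Euc n)) (x p : Euc n) : Prop :=
  p ∈ K ∧ ∀ w ∈ K, ⟪x - p, w - p⟫ ≤ 0

open Classical in
def projPt (K : Set (Euc n)) (x : Euc n) : Euc n :=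
  if h : ∃ p, IsProj K x p then h.choose else 0

lemma isProj_unique {K : Set (Euc n)} {x p q : Euc n} (hp : IsProj K x p) (hq : IsProj K x q) :
    p = q := by
  have h1 := hp.2 q hq.1
  have h2 := hq.2 p hp.1
  have e : ⟪q - p, q - p⟫ = ⟪x - p, q - p⟫ - ⟪x - q, q - p⟫ := by
    rw [← inner_sub_left]; congr 1; abel
  have h2' : (0:ℝ) ≤ ⟪x - q, q - p⟫ := by
    have : ⟪x - q, -(q - p)⟫ ≤ 0 := by
      rw [show -(q - p) = p - q by abel]; exact h2
    rw [inner_neg_right] at this; linarith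
  have hqp : ⟪q - p, q - p⟫ ≤ 0 := by rw [e]; linarith
  have h0 := real_inner_self_nonneg (x := q - p)
  have : ⟪q - p, q - p⟫ = (0:ℝ) := le_antisymm hqp h0
  have : q - p = 0 := by
    exact (inner_self_eq_zero (𝕜 := ℝ) (x := q - p)).mp this
  have : q = p := sub_eq_zero.mp this
  exact this.symm

lemma isProj_exists {K : Set (Euc n)} (hK : IsCompact K) (hc : Convex ℝ K) (hne : K.Nonempty)
    (x : Euc n) : IsProj K x (projPt K x) := by
  classical
  obtain ⟨v, hv, hmin⟩ := exists_norm_eq_iInf_of_complete_convex hne hK.isComplete hc x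
  have hvp : IsProj K x v := ⟨hv, (norm_eq_iInf_iff_real_inner_le_zero hc hv).mp hmin⟩
  have h : ∃ p, IsProj K x p := ⟨v, hvp⟩
  rw [projPt, dif_pos h]
  exact h.choose_spec

lemma isProj_norm_le {K : Set (Euc n)} {x p : Euc n} (hp : IsProj K x p) {k : Euc n} (hk : k ∈ K) :
    ‖x - p‖ ≤ ‖x - k‖ := by
  have h := hp.2 k hk
  have e : x - k = (x - p) - (k - p) := by abel
  have hsq : ‖x - k‖ ^ 2 = ‖x - p‖ ^ 2 - 2 * ⟪x - p, k - p⟫ + ‖k - p‖ ^ 2 := by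
    rw [e, ← real_inner_self_eq_norm_sq, ← real_inner_self_eq_norm_sq,
      ← real_inner_self_eq_norm_sq, inner_sub_sub_self]
    rw [real_inner_comm (k - p) (x - p)]
    ring
  nlinarith [norm_nonneg (x - k), norm_nonneg (x - p), sq_nonneg (‖k - p‖)]

/-- `K + closedBall 0 r` is the sub-level set of the distance to the projection. -/
lemma add_ball_eq {K : Set (Euc n)} (hK : IsCompact K) (hc : Convex ℝ K) (hne : K.Nonempty)
    {r : ℝ} (hr : 0 ≤ r) :
    K + closedBall (0 : Euc n) r = {x | ‖x - projPt K x‖ ≤ r} := by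
  ext x
  constructor
  · rintro ⟨k, hk, b, hb, rfl⟩
    have h1 : ‖k + b - projPt K (k + b)‖ ≤ ‖k + b - k‖ :=
      isProj_norm_le (isProj_exists hK hc hne _) hk
    simp only [mem_setOf_eq]
    calc ‖k + b - projPt K (k + b)‖ ≤ ‖k + b - k‖ := h1
      _ = ‖b‖ := by congr 1; abel
      _ ≤ r := by simpa [dist_eq_norm] using hb
  · intro hx
    refine ⟨projPt K x, (isProj_exists hK hc hne x).1, x - projPt K x, ?_, by module⟩
    simpa [mem_closedBall, dist_eq_norm] using hx


def tMap (K : Set (Euc n)) (a : ℝ) (x : Euc n) : Euc n :=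
  x - (a / ‖x - projPt K x‖) • (x - projPt K x)

/-- abstract inner-product computation for the Lipschitz bound -/
lemma lip_core {E : Type*} [NormedAddCommGroup E] [InnerProductSpace ℝ E]
    {a : ℝ} (ha : 0 < a) (u v p q : E)
    (hu0 : a ≤ ‖u‖) (hv0 : a ≤ ‖v‖)
    (h1 : ⟪u, q - p⟫ ≤ 0) (h2 : ⟪v, p - q⟫ ≤ 0) :
    ‖((p + u) - (q + v)) - a • ((‖u‖)⁻¹ • u - (‖v‖)⁻¹ • v)‖ ≤ ‖(p + u) - (q + v)‖ := by
  set dx := ‖u‖ with hdx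
  set dy := ‖v‖ with hdy
  have hdx0 : 0 < dx := lt_of_lt_of_le ha hu0
  have hdy0 : 0 < dy := lt_of_lt_of_le ha hv0
  set nx : E := dx⁻¹ • u with hnx
  set ny : E := dy⁻¹ • v with hny
  set w : E := nx - ny with hw
  set z : E := (p + u) - (q + v) with hz
  have hnxn : ‖nx‖ = 1 := by rw [hnx, norm_smul, norm_inv, norm_norm, ← hdx]; field_simp
  have hnyn : ‖ny‖ = 1 := by rw [hny, norm_smul, norm_inv, norm_norm, ← hdy]; field_simp
  have key1 : (0:ℝ) ≤ ⟪w, p - q⟫ := by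
    have e1 : ⟪w, p - q⟫ = dx⁻¹ * ⟪u, p - q⟫ - dy⁻¹ * ⟪v, p - q⟫ := by
      rw [hw, inner_sub_left, hnx, hny, real_inner_smul_left, real_inner_smul_left]
    have e2 : ⟪u, p - q⟫ = -⟪u, q - p⟫ := by rw [← inner_neg_right]; congr 1; abel
    rw [e1, e2]
    have hx' : (0:ℝ) ≤ dx⁻¹ := by positivity
    have hy' : (0:ℝ) ≤ dy⁻¹ := by positivity
    nlinarith
  have hinu : ⟪nx, u⟫ = dx := by
    rw [hnx, real_inner_smul_left, real_inner_self_eq_norm_sq, ← hdx]; field_simp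
  have hinv : ⟪ny, v⟫ = dy := by
    rw [hny, real_inner_smul_left, real_inner_self_eq_norm_sq, ← hdy]; field_simp
  have hunv : u = dx • nx := by rw [hnx, smul_smul]; field_simp; rw [one_smul]
  have hvnv : v = dy • ny := by rw [hny, smul_smul]; field_simp; rw [one_smul]
  have hx_v : ⟪nx, v⟫ = dy * ⟪nx, ny⟫ := by
    conv_lhs => rw [hvnv]
    rw [real_inner_smul_right]
  have hy_u : ⟪ny, u⟫ = dx * ⟪nx, ny⟫ := by
    conv_lhs => rw [hunv]
    rw [real_inner_smul_right, real_inner_comm]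
  have hwsq : ‖w‖ ^ 2 = 2 - 2 * ⟪nx, ny⟫ := by
    rw [hw, ← real_inner_self_eq_norm_sq, inner_sub_sub_self, real_inner_self_eq_norm_sq,
      real_inner_self_eq_norm_sq, hnxn, hnyn, real_inner_comm ny nx]
    ring
  have key2 : ⟪w, u - v⟫ = (dx + dy) / 2 * ‖w‖ ^ 2 := by
    have e : ⟪w, u - v⟫ = ⟪nx, u⟫ - ⟪nx, v⟫ - (⟪ny, u⟫ - ⟪ny, v⟫) := by
      rw [hw, inner_sub_left, inner_sub_right, inner_sub_right]
    rw [e, hinu, hinv, hx_v, hy_u, hwsq]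
    ring
  have key3 : a * ‖w‖ ^ 2 ≤ ⟪w, z⟫ := by
    have e : z = (p - q) + (u - v) := by rw [hz]; abel
    rw [e, inner_add_right, key2]
    nlinarith [sq_nonneg ‖w‖]
  have hsq : ‖z - a • w‖ ^ 2 ≤ ‖z‖ ^ 2 := by
    rw [← real_inner_self_eq_norm_sq, inner_sub_sub_self, real_inner_smul_left,
      real_inner_smul_right, real_inner_smul_left, real_inner_smul_right,
      real_inner_self_eq_norm_sq z, real_inner_self_eq_norm_sq w, real_inner_comm w z]
    nlinarith [mul_le_mul_of_nonneg_left key3 (le_of_lt ha), sq_nonneg ‖w‖, sq_nonneg a,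
      mul_nonneg (sq_nonneg a) (sq_nonneg ‖w‖)]
  nlinarith [norm_nonneg (z - a • w), norm_nonneg z]

lemma tMap_lipschitz {K : Set (Euc n)} (hK : IsCompact K) (hc : Convex ℝ K) (hne : K.Nonempty)
    {a : ℝ} (ha : 0 < a) :
    LipschitzOnWith 1 (tMap K a) {x | a ≤ ‖x - projPt K x‖} := by
  rw [lipschitzOnWith_iff_dist_le_mul]
  intro x hx y hy
  simp only [mem_setOf_eq] at hx hy
  have hxp := isProj_exists hK hc hne x
  have hyp := isProj_exists hK hc hne y
  have h1 : ⟪x - projPt K x, projPt K y - projPt K x⟫ ≤ 0 := hxp.2 _ hyp.1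
  have h2 : ⟪y - projPt K y, projPt K x - projPt K y⟫ ≤ 0 := hyp.2 _ hxp.1
  have core := lip_core ha (x - projPt K x) (y - projPt K y) (projPt K x) (projPt K y)
    hx hy h1 h2
  have ex : projPt K x + (x - projPt K x) = x := by abel
  have ey : projPt K y + (y - projPt K y) = y := by abel
  rw [ex, ey] at core
  have hTx : tMap K a x = x - a • ((‖x - projPt K x‖)⁻¹ • (x - projPt K x)) := by
    rw [tMap, smul_smul, div_eq_mul_inv]
  have hTy : tMap K a y = y - a • ((‖y - projPt K y‖)⁻¹ • (y - projPt K y)) := by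
    rw [tMap, smul_smul, div_eq_mul_inv]
  rw [NNReal.coe_one, one_mul, dist_eq_norm, dist_eq_norm, hTx, hTy]
  calc ‖x - a • ((‖x - projPt K x‖)⁻¹ • (x - projPt K x)) -
        (y - a • ((‖y - projPt K y‖)⁻¹ • (y - projPt K y)))‖
      = ‖(x - y) - a • ((‖x - projPt K x‖)⁻¹ • (x - projPt K x)
          - (‖y - projPt K y‖)⁻¹ • (y - projPt K y))‖ := by rw [smul_sub]; congr 1; module
    _ ≤ ‖x - y‖ := core


lemma add_ball_zero {K : Set (Euc n)} : K + closedBall (0 : Euc n) 0 = K := by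
  simp [closedBall_zero, Set.add_singleton]

lemma shell_subset_image {K : Set (Euc n)} (hK : IsCompact K) (hc : Convex ℝ K)
    (hne : K.Nonempty) {a δ : ℝ} (ha : 0 < a) (hδ : 0 ≤ δ) :
    (K + closedBall (0 : Euc n) δ) \ K ⊆
      tMap K a '' ((K + closedBall (0 : Euc n) (a + δ)) \ (K + closedBall (0 : Euc n) a)) := by
  rintro z ⟨hz1, hz2⟩
  set pz := projPt K z with hpz
  have hzp := isProj_exists hK hc hne z
  rw [add_ball_eq hK hc hne hδ] at hz1
  have hdz : ‖z - pz‖ ≤ δ := hz1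
  have hdz0 : 0 < ‖z - pz‖ := by
    rcases eq_or_lt_of_le (norm_nonneg (z - pz)) with h | h
    · exfalso
      have : z - pz = 0 := by rw [← norm_eq_zero]; exact h.symm
      have : z = pz := sub_eq_zero.mp this
      exact hz2 (this ▸ hzp.1)
    · exact h
  set dz := ‖z - pz‖ with hdzdef
  set x := z + (a / dz) • (z - pz) with hx
  have hxsub : x - pz = (1 + a / dz) • (z - pz) := by
    rw [hx]; module
  have hcpos : 0 < 1 + a / dz := by positivity
  have hxp : IsProj K x pz := by
    refine ⟨hzp.1, fun w hw => ?_⟩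
    rw [hxsub, real_inner_smul_left]
    exact mul_nonpos_of_nonneg_of_nonpos hcpos.le (hzp.2 w hw)
  have hprojx : projPt K x = pz := isProj_unique (isProj_exists hK hc hne x) hxp
  have hdx : ‖x - projPt K x‖ = dz + a := by
    rw [hprojx, hxsub, norm_smul, Real.norm_of_nonneg hcpos.le, ← hdzdef]
    field_simp
  refine ⟨x, ⟨?_, ?_⟩, ?_⟩
  · rw [add_ball_eq hK hc hne (by linarith : (0:ℝ) ≤ a + δ)]
    show ‖x - projPt K x‖ ≤ a + δ
    rw [hdx]; linarith
  · rw [add_ball_eq hK hc hne ha.le]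
    show ¬ (‖x - projPt K x‖ ≤ a)
    rw [hdx]; push_neg; linarith
  · rw [tMap, hdx, hprojx, hxsub, smul_smul]
    have hsc : a / (dz + a) * (1 + a / dz) = a / dz := by
      field_simp
    rw [hsc, hx]
    module

lemma shell_le {K : Set (Euc n)} (hK : IsCompact K) (hc : Convex ℝ K) (hne : K.Nonempty)
    {a δ : ℝ} (ha : 0 ≤ a) (hδ : 0 ≤ δ) :
    volume ((K + closedBall (0 : Euc n) δ) \ K) ≤
      volume ((K + closedBall (0 : Euc n) (a + δ)) \ (K + closedBall (0 : Euc n) a)) := by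
  rcases eq_or_lt_of_le ha with rfl | ha'
  · simp [add_ball_zero]
  · calc volume ((K + closedBall (0 : Euc n) δ) \ K)
        ≤ volume (tMap K a ''
            ((K + closedBall (0 : Euc n) (a + δ)) \ (K + closedBall (0 : Euc n) a))) :=
          measure_mono (shell_subset_image hK hc hne ha' hδ)
      _ ≤ volume ((K + closedBall (0 : Euc n) (a + δ)) \ (K + closedBall (0 : Euc n) a)) := by
          apply vol_image_le
          apply (tMap_lipschitz hK hc hne ha').mono
          intro x hx
          simp only [mem_diff, add_ball_eq hK hc hne (by linarith : (0:ℝ) ≤ a + δ),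
            add_ball_eq hK hc hne ha'.le, mem_setOf_eq, not_le] at hx
          exact le_of_lt hx.2

lemma vol_superadd {K : Set (Euc n)} (hK : IsCompact K) (hc : Convex ℝ K)
    {a δ : ℝ} (ha : 0 ≤ a) (hδ : 0 ≤ δ) :
    volume (K + closedBall (0 : Euc n) δ) + volume (K + closedBall (0 : Euc n) a) ≤
      volume (K + closedBall (0 : Euc n) (a + δ)) + volume K := by
  rcases K.eq_empty_or_nonempty with rfl | hne
  · simp
  have hsub : ∀ {r r' : ℝ}, 0 ≤ r → r ≤ r' →
      K + closedBall (0 : Euc n) r ⊆ K + closedBall (0 : Euc n) r' := by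
    intro r r' _ hrr'
    exact Set.add_subset_add_left (closedBall_subset_closedBall hrr')
  have hKsub : ∀ {r : ℝ}, 0 ≤ r → K ⊆ K + closedBall (0 : Euc n) r := by
    intro r hr
    conv_lhs => rw [← add_ball_zero (K := K)]
    exact hsub le_rfl hr
  have hmK : NullMeasurableSet K (volume : Measure (Euc n)) :=
    hK.isClosed.measurableSet.nullMeasurableSet
  have hmA : ∀ r : ℝ, NullMeasurableSet (K + closedBall (0 : Euc n) r) (volume : Measure (Euc n)) :=
    fun r => ((hK.add (isCompact_closedBall _ _)).isClosed.measurableSet).nullMeasurableSet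
  have e1 : volume K + volume ((K + closedBall (0 : Euc n) δ) \ K)
      = volume (K + closedBall (0 : Euc n) δ) := by
    rw [measure_add_diff hmK, union_eq_self_of_subset_left (hKsub hδ)]
  have e2 : volume (K + closedBall (0 : Euc n) a)
        + volume ((K + closedBall (0 : Euc n) (a + δ)) \ (K + closedBall (0 : Euc n) a))
      = volume (K + closedBall (0 : Euc n) (a + δ)) := by
    rw [measure_add_diff (hmA a), union_eq_self_of_subset_left (hsub ha (by linarith))]
  calc volume (K + closedBall (0 : Euc n) δ) + volume (K + closedBall (0 : Euc n) a)
      = volume K + volume ((K + closedBall (0 : Euc n) δ) \ K)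
          + volume (K + closedBall (0 : Euc n) a) := by rw [e1]
    _ ≤ volume K + volume ((K + closedBall (0 : Euc n) (a + δ)) \ (K + closedBall (0 : Euc n) a))
          + volume (K + closedBall (0 : Euc n) a) :=
        add_le_add (add_le_add le_rfl (shell_le hK hc hne ha hδ)) le_rfl
    _ = volume (K + closedBall (0 : Euc n) a)
          + volume ((K + closedBall (0 : Euc n) (a + δ)) \ (K + closedBall (0 : Euc n) a))
          + volume K := by ring
    _ = volume (K + closedBall (0 : Euc n) (a + δ)) + volume K := by rw [e2]


lemma nat_superadd {h : ℝ → ℝ} (h0 : h 0 = 0)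
    (hsup : ∀ a δ : ℝ, 0 ≤ a → 0 ≤ δ → h a + h δ ≤ h (a + δ)) :
    ∀ (k : ℕ) (t : ℝ), 0 ≤ t → (k : ℝ) * h t ≤ h ((k : ℝ) * t) := by
  intro k
  induction k with
  | zero => intro t _; simp [h0]
  | succ k ih =>
    intro t ht
    have h1 := ih t ht
    have h2 := hsup ((k : ℝ) * t) t (by positivity) ht
    push_cast
    calc ((k : ℝ) + 1) * h t = (k : ℝ) * h t + h t := by ring
      _ ≤ h ((k : ℝ) * t) + h t := by linarith
      _ ≤ h ((k : ℝ) * t + t) := h2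
      _ = h (((k : ℝ) + 1) * t) := by ring_nf

lemma h_nonneg {h : ℝ → ℝ} (h0 : h 0 = 0) (hmono : MonotoneOn h (Ici 0)) {t : ℝ} (ht : 0 ≤ t) :
    0 ≤ h t := by
  have := hmono (self_mem_Ici) (mem_Ici.mpr ht) ht
  linarith [this, h0 ▸ this]

lemma q_le {h : ℝ → ℝ} (h0 : h 0 = 0) (hmono : MonotoneOn h (Ici 0))
    (hsup : ∀ a δ : ℝ, 0 ≤ a → 0 ≤ δ → h a + h δ ≤ h (a + δ))
    {s t : ℝ} (hs : 0 < s) (hst : s < t) :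
    h s / s ≤ h t / (t - s) := by
  set k := ⌊t / s⌋₊ with hk
  have hk1 : 1 ≤ k := Nat.le_floor (by rw [Nat.cast_one, le_div_iff₀ hs]; linarith)
  have hks : (k : ℝ) * s ≤ t := by
    rw [← le_div_iff₀ hs]; exact Nat.floor_le (div_pos (lt_trans hs hst) hs).le
  have hks2 : t - s < (k : ℝ) * s := by
    have := Nat.lt_floor_add_one (t / s)
    rw [div_lt_iff₀ hs] at this
    push_cast at this
    nlinarith
  have hhs : 0 ≤ h s := h_nonneg h0 hmono hs.le
  have hht : 0 ≤ h t := h_nonneg h0 hmono (by linarith)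
  have hsup' : (k : ℝ) * h s ≤ h ((k : ℝ) * s) := nat_superadd h0 hsup k s hs.le
  have hmono' : h ((k : ℝ) * s) ≤ h t :=
    hmono (mem_Ici.mpr (by positivity)) (mem_Ici.mpr (by linarith)) hks
  rw [div_le_div_iff₀ hs (by linarith)]
  nlinarith [mul_le_mul_of_nonneg_right hsup' hs.le]

lemma lim_aux {h : ℝ → ℝ} (h0 : h 0 = 0) (hmono : MonotoneOn h (Ici 0))
    (hsup : ∀ a δ : ℝ, 0 ≤ a → 0 ≤ δ → h a + h δ ≤ h (a + δ)) :
    Tendsto (fun t => h t / t) (𝓝[>] (0:ℝ)) (𝓝 (⨅ t : Ioi (0:ℝ), h t.1 / t.1)) := by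
  set q : ℝ → ℝ := fun t => h t / t with hq
  have hq0 : ∀ t : ℝ, 0 < t → 0 ≤ q t := fun t ht =>
    div_nonneg (h_nonneg h0 hmono ht.le) ht.le
  have bdd : BddBelow (range fun t : Ioi (0:ℝ) => q t.1) := by
    refine ⟨0, ?_⟩
    rintro x ⟨t, rfl⟩
    exact hq0 t.1 t.2
  set L := ⨅ t : Ioi (0:ℝ), q t.1 with hL
  have hL_le : ∀ t : ℝ, 0 < t → L ≤ q t := fun t ht => ciInf_le bdd ⟨t, ht⟩
  rw [tendsto_order]
  constructor
  · intro c hc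
    filter_upwards [self_mem_nhdsWithin] with s hs
    exact lt_of_lt_of_le hc (hL_le s hs)
  · intro c hc
    obtain ⟨⟨t, ht⟩, hqt⟩ : ∃ t : Ioi (0:ℝ), q t.1 < c := by
      by_contra hcon
      push_neg at hcon
      exact absurd (le_ciInf hcon) (not_le.mpr hc)
    have htpos : (0:ℝ) < t := ht
    have hcont : Tendsto (fun s : ℝ => h t / (t - s)) (𝓝[>] (0:ℝ)) (𝓝 (h t / t)) := by
      apply Tendsto.mono_left _ nhdsWithin_le_nhds
      have : Tendsto (fun s : ℝ => t - s) (𝓝 0) (𝓝 t) := by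
        simpa using (tendsto_const_nhds (x := t)).sub (Filter.tendsto_id (x := 𝓝 (0:ℝ)))
      exact tendsto_const_nhds.div this (ne_of_gt htpos)
    have hev : ∀ᶠ s in 𝓝[>] (0:ℝ), h t / (t - s) < c := hcont.eventually_lt_const hqt
    have hev2 : ∀ᶠ s in 𝓝[>] (0:ℝ), s < t := eventually_nhdsWithin_of_eventually_nhds
      (gt_mem_nhds htpos)
    filter_upwards [hev, hev2, self_mem_nhdsWithin] with s h1 h2 h3
    exact lt_of_le_of_lt (q_le h0 hmono hsup h3 h2) h1

lemma lim_bounds {h : ℝ → ℝ} (h0 : h 0 = 0) (hmono : MonotoneOn h (Ici 0)) :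
    (0 ≤ ⨅ t : Ioi (0:ℝ), h t.1 / t.1) := by
  apply le_ciInf
  rintro ⟨t, ht⟩
  exact div_nonneg (h_nonneg h0 hmono (le_of_lt ht)) (le_of_lt ht)

lemma lim_le {h : ℝ → ℝ} (h0 : h 0 = 0) (hmono : MonotoneOn h (Ici 0)) {t : ℝ} (ht : 0 < t) :
    (⨅ t : Ioi (0:ℝ), h t.1 / t.1) ≤ h t / t := by
  have bdd : BddBelow (range fun t : Ioi (0:ℝ) => h t.1 / t.1) := by
    refine ⟨0, ?_⟩
    rintro x ⟨s, rfl⟩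
    exact div_nonneg (h_nonneg h0 hmono (le_of_lt s.2)) (le_of_lt s.2)
  exact ciInf_le bdd ⟨t, ht⟩

lemma q_dominated {h : ℝ → ℝ} (h0 : h 0 = 0) (hmono : MonotoneOn h (Ici 0))
    (hsup : ∀ a δ : ℝ, 0 ≤ a → 0 ≤ δ → h a + h δ ≤ h (a + δ))
    {t₀ : ℝ} (ht₀ : 0 < t₀) {s : ℝ} (hs : 0 < s) (hs2 : s ≤ t₀ / 2) :
    h s / s ≤ 2 * h t₀ / t₀ := by
  have h1 : h s / s ≤ h t₀ / (t₀ - s) := q_le h0 hmono hsup hs (by linarith)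
  have h2 : h t₀ / (t₀ - s) ≤ h t₀ / (t₀ / 2) :=
    div_le_div_of_nonneg_left (h_nonneg h0 hmono ht₀.le) (by linarith) (by linarith)
  calc h s / s ≤ h t₀ / (t₀ - s) := h1
    _ ≤ h t₀ / (t₀ / 2) := h2
    _ = 2 * h t₀ / t₀ := by field_simp


end Stmt3Aux

open Stmt3Aux

theorem stmt3 {n : ℕ} (hn : 1 ≤ n) (f : Euc n → ℝ) (hf0 : ∀ x, 0 ≤ f x)
    (husc : UpperSemicontinuous f)
    (hlev : ∀ s : ℝ, 0 < s → IsCompact {x | s ≤ f x} ∧ Convex ℝ {x | s ≤ f x})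
    (F : ℝ → ℝ≥0∞)
    (hF : ∀ t : ℝ, F t =
      ∫⁻ s in Ioi (0 : ℝ), volume ({x | s ≤ f x} + t • closedBall (0 : Euc n) 1))
    (t₀ : ℝ) (ht₀ : 0 < t₀) (hfin : F t₀ < ⊤) :
    ∃ S : ℝ → ℝ,
      (∀ s : ℝ, 0 < s → 0 ≤ S s ∧
        Tendsto (fun t : ℝ =>
            ((volume ({x | s ≤ f x} + t • closedBall (0 : Euc n) 1)).toReal
              - (volume {x | s ≤ f x}).toReal) / t)
          (𝓝[>] (0 : ℝ)) (𝓝 (S s))) ∧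
      IntegrableOn S (Ioi (0 : ℝ)) ∧
      Tendsto (fun t : ℝ => ((F t).toReal - (F 0).toReal) / t) (𝓝[>] (0 : ℝ))
        (𝓝 (∫ s in Ioi (0 : ℝ), S s)) := by
  classical
  -- basic definitions
  set Kf : ℝ → Set (Euc n) := fun s => {x | s ≤ f x} with hKf
  set hfun : ℝ → ℝ → ℝ := fun s t =>
    (volume (Kf s + closedBall (0 : Euc n) t)).toReal - (volume (Kf s)).toReal with hhfun
  set S : ℝ → ℝ := fun s => if 0 < s then ⨅ t : Ioi (0:ℝ), hfun s t.1 / t.1 else 0 with hS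
  -- finiteness of all volumes for s > 0
  have mfin : ∀ s : ℝ, 0 < s → ∀ t : ℝ, volume (Kf s + closedBall (0 : Euc n) t) ≠ ⊤ := by
    intro s hs t
    rcases le_or_gt 0 t with ht | ht
    · exact (((hlev s hs).1.add (isCompact_closedBall _ _)).measure_lt_top).ne
    · rw [closedBall_eq_empty.mpr ht]
      simp
  have Kfin : ∀ s : ℝ, 0 < s → volume (Kf s) ≠ ⊤ := by
    intro s hs
    have := mfin s hs 0
    rwa [Stmt3Aux.add_ball_zero] at this
  -- hfun basic properties
  have h0 : ∀ s : ℝ, hfun s 0 = 0 := by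
    intro s; simp only [hhfun, Stmt3Aux.add_ball_zero, sub_self]
  have hmono : ∀ s : ℝ, 0 < s → MonotoneOn (hfun s) (Ici 0) := by
    intro s hs a _ b _ hab
    simp only [hhfun]
    have : volume (Kf s + closedBall (0 : Euc n) a) ≤ volume (Kf s + closedBall (0 : Euc n) b) :=
      measure_mono (Set.add_subset_add_left (closedBall_subset_closedBall hab))
    have := ENNReal.toReal_mono (mfin s hs b) this
    linarith
  have hsup : ∀ s : ℝ, 0 < s → ∀ a δ : ℝ, 0 ≤ a → 0 ≤ δ →
      hfun s a + hfun s δ ≤ hfun s (a + δ) := by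
    intro s hs a δ ha hδ
    have E := vol_superadd (hlev s hs).1 (hlev s hs).2 ha hδ
    have hA := mfin s hs δ
    have hB := mfin s hs a
    have hC := mfin s hs (a + δ)
    have hD := Kfin s hs
    have E' : (volume (Kf s + closedBall (0 : Euc n) δ)).toReal
        + (volume (Kf s + closedBall (0 : Euc n) a)).toReal
        ≤ (volume (Kf s + closedBall (0 : Euc n) (a + δ))).toReal
        + (volume (Kf s)).toReal := by
      rw [← ENNReal.toReal_add hA hB, ← ENNReal.toReal_add hC hD]
      exact ENNReal.toReal_mono (by finiteness) E
    simp only [hhfun]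
    linarith
  -- the pointwise limits
  have hlim : ∀ s : ℝ, 0 < s →
      Tendsto (fun t => hfun s t / t) (𝓝[>] (0:ℝ)) (𝓝 (S s)) := by
    intro s hs
    rw [hS]
    simp only [if_pos hs]
    exact lim_aux (h0 s) (hmono s hs) (hsup s hs)
  -- rewriting the smul ball
  have hball : ∀ t : ℝ, 0 ≤ t → t • closedBall (0 : Euc n) 1 = closedBall (0 : Euc n) t := by
    intro t ht
    rw [smul_unitClosedBall, Real.norm_of_nonneg ht]
  -- part 1
  have part1 : ∀ s : ℝ, 0 < s → 0 ≤ S s ∧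
      Tendsto (fun t : ℝ =>
          ((volume ({x | s ≤ f x} + t • closedBall (0 : Euc n) 1)).toReal
            - (volume {x | s ≤ f x}).toReal) / t)
        (𝓝[>] (0 : ℝ)) (𝓝 (S s)) := by
    intro s hs
    constructor
    · rw [hS]; simp only [if_pos hs]
      exact lim_bounds (h0 s) (hmono s hs)
    · apply (hlim s hs).congr'
      filter_upwards [self_mem_nhdsWithin] with t ht
      simp only [hhfun, hball t (le_of_lt ht)]; rfl
  -- measurability in s
  have vmeas : ∀ t : ℝ, Measurable (fun s => volume (Kf s + closedBall (0 : Euc n) t)) := by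
    intro t
    apply Antitone.measurable
    intro s s' hss'
    apply measure_mono
    apply Set.add_subset_add_right
    intro x hx
    exact le_trans hss' hx
  have Kmeas : Measurable (fun s => volume (Kf s)) := by
    have := vmeas 0
    simpa only [Stmt3Aux.add_ball_zero] using this
  have qmeas : ∀ t : ℝ, Measurable (fun s => hfun s t / t) := by
    intro t
    apply Measurable.div_const
    exact ((vmeas t).ennreal_toReal.sub Kmeas.ennreal_toReal)
  have Smeas : Measurable S := by
    have key : ∀ s : ℝ, Tendsto (fun k : ℕ => if 0 < s then hfun s (1/(k+1)) / (1/(k+1)) else 0)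
        atTop (𝓝 (S s)) := by
      intro s
      by_cases hs : 0 < s
      · simp only [if_pos hs]
        have hseq : Tendsto (fun k : ℕ => (1:ℝ)/(k+1)) atTop (𝓝[>] (0:ℝ)) := by
          rw [tendsto_nhdsWithin_iff]
          constructor
          · exact tendsto_one_div_add_atTop_nhds_zero_nat
          · filter_upwards with k
            exact mem_Ioi.mpr (by positivity)
        exact (hlim s hs).comp hseq
      · simp only [if_neg hs, hS]
        exact tendsto_const_nhds
    apply measurable_of_tendsto_metrizable (f := fun k : ℕ => fun s =>
      if 0 < s then hfun s (1/(k+1)) / (1/(k+1)) else 0)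
    · intro k
      exact Measurable.ite measurableSet_Ioi (qmeas _) measurable_const
    · rw [tendsto_pi_nhds]
      exact key
  -- bound function and its integrability
  set B₀ : ℝ → ℝ := fun s => (volume (Kf s + closedBall (0 : Euc n) t₀)).toReal with hB₀
  have hFt0 : (∫⁻ s in Ioi (0:ℝ), volume (Kf s + closedBall (0 : Euc n) t₀)) ≠ ⊤ := by
    have := hF t₀
    rw [hball t₀ ht₀.le] at this
    rw [← this]
    exact hfin.ne
  have B₀int : IntegrableOn B₀ (Ioi (0:ℝ)) := by
    apply integrable_toReal_of_lintegral_ne_top ((vmeas t₀).aemeasurable) hFt0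
  -- S is dominated by B₀ / t₀ on Ioi 0
  have Sle : ∀ s : ℝ, 0 < s → S s ≤ B₀ s / t₀ := by
    intro s hs
    rw [hS]; simp only [if_pos hs]
    calc (⨅ t : Ioi (0:ℝ), hfun s t.1 / t.1) ≤ hfun s t₀ / t₀ :=
          lim_le (h0 s) (hmono s hs) ht₀
      _ ≤ B₀ s / t₀ := by
          have hle : hfun s t₀ ≤ B₀ s := by
            simp only [hhfun, hB₀]
            have := ENNReal.toReal_nonneg (a := volume (Kf s))
            linarith
          gcongr
  -- integrability of S
  have Sint : IntegrableOn S (Ioi (0:ℝ)) := by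
    apply Integrable.mono' (B₀int.div_const t₀) Smeas.aestronglyMeasurable
    rw [ae_restrict_iff' measurableSet_Ioi]
    filter_upwards with s hs
    rw [Real.norm_eq_abs, abs_of_nonneg (part1 s hs).1]
    exact Sle s hs
  -- F formula for 0 ≤ t
  have hFeq : ∀ t : ℝ, 0 ≤ t →
      F t = ∫⁻ s in Ioi (0:ℝ), volume (Kf s + closedBall (0 : Euc n) t) := by
    intro t ht
    rw [hF t]
    apply lintegral_congr
    intro s
    rw [hball t ht]
  have hFle : ∀ t : ℝ, 0 ≤ t → t ≤ t₀ → F t ≠ ⊤ := by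
    intro t ht htt
    have hle : F t ≤ F t₀ := by
      rw [hFeq t ht, hFeq t₀ ht₀.le]
      apply lintegral_mono
      intro s
      exact measure_mono (Set.add_subset_add_left (closedBall_subset_closedBall htt))
    exact (lt_of_le_of_lt hle hfin).ne
  have int_m : ∀ t : ℝ, 0 ≤ t → t ≤ t₀ → IntegrableOn
      (fun s => (volume (Kf s + closedBall (0 : Euc n) t)).toReal) (Ioi (0:ℝ)) := by
    intro t ht htt
    apply integrable_toReal_of_lintegral_ne_top ((vmeas t).aemeasurable)
    rw [← hFeq t ht]
    exact hFle t ht htt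
  have int_K : IntegrableOn (fun s => (volume (Kf s)).toReal) (Ioi (0:ℝ)) := by
    have := int_m 0 le_rfl ht₀.le
    simpa only [Stmt3Aux.add_ball_zero] using this
  have hFtoReal : ∀ t : ℝ, 0 ≤ t → t ≤ t₀ →
      (F t).toReal = ∫ s in Ioi (0:ℝ), (volume (Kf s + closedBall (0:Euc n) t)).toReal := by
    intro t ht htt
    have hae : ∀ᵐ s ∂(volume.restrict (Ioi (0:ℝ))),
        volume (Kf s + closedBall (0:Euc n) t) < ⊤ := by
      apply ae_lt_top' ((vmeas t).aemeasurable.restrict)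
      rw [← hFeq t ht]
      exact hFle t ht htt
    rw [hFeq t ht]
    exact (integral_toReal ((vmeas t).aemeasurable.restrict) hae).symm
  -- eventual equality of the difference quotient with the integral
  have eq_ev : ∀ᶠ t in 𝓝[>] (0:ℝ), ((F t).toReal - (F 0).toReal) / t
      = ∫ s in Ioi (0:ℝ), hfun s t / t := by
    filter_upwards [Ioc_mem_nhdsGT (half_pos ht₀)] with t ht
    obtain ⟨ht0, ht2⟩ := ht
    have htle : t ≤ t₀ := le_trans ht2 (by linarith)
    have e1 := hFtoReal t ht0.le htle
    have e0 := hFtoReal 0 le_rfl ht₀.le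
    simp only [Stmt3Aux.add_ball_zero] at e0
    rw [e1, e0, ← integral_sub (int_m t ht0.le htle) int_K, ← integral_div]
  -- dominated convergence
  have dct : Tendsto (fun t : ℝ => ∫ s in Ioi (0:ℝ), hfun s t / t) (𝓝[>] (0:ℝ))
      (𝓝 (∫ s in Ioi (0:ℝ), S s)) := by
    apply tendsto_integral_filter_of_dominated_convergence (bound := fun s => 2 * B₀ s / t₀)
    · filter_upwards with t
      exact (qmeas t).aestronglyMeasurable
    · filter_upwards [Ioc_mem_nhdsGT (half_pos ht₀)] with t ht
      rw [ae_restrict_iff' measurableSet_Ioi]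
      filter_upwards with s hs
      have hq0 : 0 ≤ hfun s t / t :=
        div_nonneg (h_nonneg (h0 s) (hmono s hs) ht.1.le) ht.1.le
      rw [Real.norm_eq_abs, abs_of_nonneg hq0]
      calc hfun s t / t ≤ 2 * hfun s t₀ / t₀ :=
            q_dominated (h0 s) (hmono s hs) (hsup s hs) ht₀ ht.1 ht.2
        _ ≤ 2 * B₀ s / t₀ := by
            have hle : hfun s t₀ ≤ B₀ s := by
              simp only [hhfun, hB₀]
              have := ENNReal.toReal_nonneg (a := volume (Kf s))
              linarith
            gcongr
    · exact (B₀int.const_mul 2).div_const t₀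
    · rw [ae_restrict_iff' measurableSet_Ioi]
      filter_upwards with s hs
      exact hlim s hs
  exact ⟨S, part1, Sint, Tendsto.congr' (EventuallyEq.symm eq_ev) dct⟩

end
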